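/- arXiv:2604.16159 — 10 statements merged into one kernel-verified Lean document; each statement's English description precedes it below -/
import Mathlib

section
/- If H is a halfspace of a convexity space (X, C) and A, B ⊆ X, then A ⊆ H and B ⊆ X \ H if and only if the convex hull of the shadow A/B is contained in H and the convex hull of the shadow B/A is contained in X \ H. -/
variable {X : Type*}

/-- The convex hull in a convexity space given by the family `C` of convex sets. -/
def cHull (C : Set (Set X)) (S : Set X) : Set X :=
  ⋂₀ {D | D ∈ C ∧ S ⊆ D}

lemma subset_cHull (C : Set (Set X)) (S : Set X) : S ⊆ cHull C S :=
  fun x hx => fun _ hD => hD.2 hx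

lemma cHull_min {C : Set (Set X)} {S D : Set X} (hD : D ∈ C) (hSD : S ⊆ D) :
    cHull C S ⊆ D :=
  Set.sInter_subset_of_mem ⟨hD, hSD⟩

/-- The shadow of `A` with respect to `B`. -/
def cShadow (C : Set (Set X)) (A B : Set X) : Set X :=
  {x | (cHull C (B ∪ {x}) ∩ A).Nonempty}

theorem halfspace_sep_iff_shadow_hull_sep (C : Set (Set X))
    (hempty : ∅ ∈ C) (huniv : Set.univ ∈ C)
    (hinter : ∀ D ⊆ C, ⋂₀ D ∈ C)
    (A B H : Set X) (hH : H ∈ C) (hHc : Hᶜ ∈ C) :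
    (A ⊆ H ∧ B ⊆ Hᶜ) ↔
      (cHull C (cShadow C A B) ⊆ H ∧ cHull C (cShadow C B A) ⊆ Hᶜ) := by
  constructor
  · rintro ⟨hA, hB⟩
    have key : ∀ (P Q G G' : Set X), G' ∈ C → P ⊆ G → Q ⊆ G' →
        (∀ z, z ∉ G → z ∈ G') → Disjoint G G' → cShadow C P Q ⊆ G := by
      intro P Q G G' hG' hP hQ hcompl hdisj x hx
      by_contra hxG
      obtain ⟨y, hy1, hy2⟩ := hx
      have hsub : cHull C (Q ∪ {x}) ⊆ G' :=
        cHull_min hG' (Set.union_subset hQ (by simp [hcompl x hxG]))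
      exact hdisj.ne_of_mem (hP hy2) (hsub hy1) rfl
    constructor
    · exact cHull_min hH (key A B H Hᶜ hHc hA hB (fun z hz => hz)
        (disjoint_compl_right))
    · exact cHull_min hHc (key B A Hᶜ H hH hB hA (fun z hz => not_not.mp hz)
        (disjoint_compl_left))
  · rintro ⟨h1, h2⟩
    constructor
    · exact fun x hx => h1 (subset_cHull _ _ ⟨x, subset_cHull _ _ (Or.inr rfl), hx⟩)
    · exact fun x hx => h2 (subset_cHull _ _ ⟨x, subset_cHull _ _ (Or.inr rfl), hx⟩)
end

section
/- Every Helly graph is pseudo-modular: for any three vertices u, v, w with 1 ≤ d(v,w) ≤ 2 and d(u,v) = d(u,w) = k ≥ 2, there exists a vertex x adjacent to both v and w with d(u,x) = k−1. -/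
variable {V : Type*}

/-- The ball of radius `r` around `v`. -/
def gball (G : SimpleGraph V) (v : V) (r : ℕ) : Set V :=
  {x | G.dist v x ≤ r}

/-- A graph is Helly if every family of pairwise intersecting balls has a common vertex. -/
def HellyGraph (G : SimpleGraph V) : Prop :=
  ∀ {ι : Type} (c : ι → V) (r : ι → ℕ),
    (∀ i j, (gball G (c i) (r i) ∩ gball G (c j) (r j)).Nonempty) →
      (⋂ i, gball G (c i) (r i)).Nonempty

private lemma dist_getVert_le (G : SimpleGraph V) (hc : G.Connected)
    {u v : V} (p : G.Walk u v) : ∀ (i : ℕ), G.dist u (p.getVert i) ≤ i := by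
  induction p with
  | nil => intro i; cases i <;> simp [SimpleGraph.Walk.getVert, SimpleGraph.dist_self]
  | @cons a b c h q ih =>
      intro i
      cases i with
      | zero => simp [SimpleGraph.Walk.getVert, SimpleGraph.dist_self]
      | succ n =>
          rw [SimpleGraph.Walk.getVert_cons_succ]
          have h1 : G.dist a b = 1 := SimpleGraph.dist_eq_one_iff_adj.mpr h
          have h2 : G.dist b (q.getVert n) ≤ n := ih n
          have h3 := hc.dist_triangle (u := a) (v := b) (w := q.getVert n)
          omega

theorem helly_is_pseudoModular (G : SimpleGraph V) (hc : G.Connected)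
    (hH : HellyGraph G) :
    ∀ (u v w : V) (k : ℕ), 1 ≤ G.dist v w → G.dist v w ≤ 2 →
      G.dist u v = k → G.dist u w = k → 2 ≤ k →
      ∃ x, G.Adj v x ∧ G.Adj w x ∧ G.dist u x = k - 1 := by
  intro u v w k h1 h2 huv huw hk
  -- apply Helly to balls B(u,k-1), B(v,1), B(w,1)
  have key : (⋂ i, gball G (![u, v, w] i) (![k - 1, 1, 1] i)).Nonempty := by
    apply hH
    intro i j
    -- helper: a point in B(u,k-1) ∩ B(a,1) when dist u a = k
    have near : ∀ a : V, G.dist u a = k →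
        ∃ z, G.dist u z ≤ k - 1 ∧ G.dist a z ≤ 1 := by
      intro a ha
      obtain ⟨p, hp⟩ := hc.exists_walk_length_eq_dist u a
      refine ⟨p.getVert (k - 1), by simpa using dist_getVert_le G hc p (k - 1), ?_⟩
      have hadj : G.Adj (p.getVert (k - 1)) (p.getVert (k - 1 + 1)) :=
        p.adj_getVert_succ (by omega)
      have : p.getVert (k - 1 + 1) = a := by
        apply p.getVert_of_length_le; omega
      rw [this] at hadj
      rw [SimpleGraph.dist_comm]
      exact le_of_eq (SimpleGraph.dist_eq_one_iff_adj.mpr hadj)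
    -- helper: a point in B(v,1) ∩ B(w,1)
    have mid : ∃ z, G.dist v z ≤ 1 ∧ G.dist w z ≤ 1 := by
      rcases Nat.lt_or_ge (G.dist v w) 2 with hlt | hge
      · exact ⟨v, by simp [SimpleGraph.dist_self], by rw [SimpleGraph.dist_comm]; omega⟩
      · have hvw : G.dist v w = 2 := by omega
        obtain ⟨p, hp⟩ := hc.exists_walk_length_eq_dist v w
        refine ⟨p.getVert 1, by simpa using dist_getVert_le G hc p 1, ?_⟩
        have hadj : G.Adj (p.getVert 1) (p.getVert 2) :=
          p.adj_getVert_succ (by omega)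
        have : p.getVert 2 = w := by apply p.getVert_of_length_le; omega
        rw [this] at hadj
        rw [SimpleGraph.dist_comm]
        exact le_of_eq (SimpleGraph.dist_eq_one_iff_adj.mpr hadj)
    fin_cases i <;> fin_cases j <;>
      simp only [Matrix.cons_val_zero, Matrix.cons_val_one, Matrix.head_cons,
        Matrix.cons_val_two, Matrix.tail_cons]
    · exact ⟨u, by simp [gball, SimpleGraph.dist_self]⟩
    · obtain ⟨z, hz1, hz2⟩ := near v huv; exact ⟨z, hz1, hz2⟩
    · obtain ⟨z, hz1, hz2⟩ := near w huw; exact ⟨z, hz1, hz2⟩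
    · obtain ⟨z, hz1, hz2⟩ := near v huv; exact ⟨z, hz2, hz1⟩
    · exact ⟨v, by simp [gball, SimpleGraph.dist_self]⟩
    · obtain ⟨z, hz1, hz2⟩ := mid; exact ⟨z, hz1, hz2⟩
    · obtain ⟨z, hz1, hz2⟩ := near w huw; exact ⟨z, hz2, hz1⟩
    · obtain ⟨z, hz1, hz2⟩ := mid; exact ⟨z, hz2, hz1⟩
    · exact ⟨w, by simp [gball, SimpleGraph.dist_self]⟩
  obtain ⟨x, hx⟩ := key
  simp only [Set.mem_iInter] at hx
  have hxu : G.dist u x ≤ k - 1 := hx 0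
  have hxv : G.dist v x ≤ 1 := hx 1
  have hxw : G.dist w x ≤ 1 := hx 2
  have hxu' : k - 1 ≤ G.dist u x := by
    have := hc.dist_triangle (u := u) (v := x) (w := v)
    rw [huv] at this
    rw [SimpleGraph.dist_comm (u := x) (v := v)] at this
    omega
  have hdux : G.dist u x = k - 1 := le_antisymm hxu hxu'
  have hxv1 : G.dist v x = 1 := by
    rcases Nat.lt_or_ge (G.dist v x) 1 with h | h
    · exfalso
      have : v = x := by
        have := (SimpleGraph.dist_eq_zero_iff_eq_or_not_reachable (G := G) (u := v) (v := x)).mp (by omega)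
        rcases this with h' | h'
        · exact h'
        · exact absurd (hc v x) h'
      rw [← this] at hdux; omega
    · omega
  have hxw1 : G.dist w x = 1 := by
    rcases Nat.lt_or_ge (G.dist w x) 1 with h | h
    · exfalso
      have : w = x := by
        have := (SimpleGraph.dist_eq_zero_iff_eq_or_not_reachable (G := G) (u := w) (v := x)).mp (by omega)
        rcases this with h' | h'
        · exact h'
        · exact absurd (hc w x) h'
      rw [← this] at hdux; omega
    · omega
  exact ⟨x, SimpleGraph.dist_eq_one_iff_adj.mp hxv1, SimpleGraph.dist_eq_one_iff_adj.mp hxw1, hdux⟩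
end

section
/- If a graph satisfies the 3-Helly property for balls (any three pairwise intersecting balls have a common point), then it is pseudo-modular. -/
variable {V : Type*}

/-- A graph is pseudo-modular if any two vertices at distance 1 or 2 that are equidistant
(at distance `k ≥ 2`) from a third vertex `u` have a common neighbor at distance `k - 1`
from `u`. -/
def PseudoModular (G : SimpleGraph V) : Prop :=
  ∀ u v w : V, 1 ≤ G.dist v w → G.dist v w ≤ 2 → 2 ≤ G.dist u v →
    G.dist u v = G.dist u w →
    ∃ x, G.Adj v x ∧ G.Adj w x ∧ G.dist u x = G.dist u v - 1

/-- A penultimate vertex on a shortest path. -/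
lemma exists_adj_dist_sub_one (G : SimpleGraph V) {u v : V} (h : 1 ≤ G.dist u v)
    (hc : G.Connected) : ∃ x, G.Adj v x ∧ G.dist u x ≤ G.dist u v - 1 := by
  obtain ⟨p, hp⟩ := (hc v u).exists_walk_length_eq_dist
  rw [SimpleGraph.dist_comm] at hp
  cases p with
  | nil => simp at h
  | cons h' q =>
    rename_i b
    refine ⟨b, h', ?_⟩
    have hle : G.dist b u ≤ q.length := G.dist_le q
    rw [SimpleGraph.dist_comm]
    simp only [SimpleGraph.Walk.length_cons] at hp
    omega

theorem threeHelly_is_pseudoModular (G : SimpleGraph V) (hc : G.Connected)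
    (h3 : ∀ (c1 c2 c3 : V) (r1 r2 r3 : ℕ),
      (gball G c1 r1 ∩ gball G c2 r2).Nonempty →
      (gball G c1 r1 ∩ gball G c3 r3).Nonempty →
      (gball G c2 r2 ∩ gball G c3 r3).Nonempty →
      (gball G c1 r1 ∩ gball G c2 r2 ∩ gball G c3 r3).Nonempty) :
    PseudoModular G := by
  intro u v w h1 h2 hk he
  have hvx : ∃ a, G.dist u a ≤ G.dist u v - 1 ∧ G.dist v a ≤ 1 := by
    obtain ⟨a, ha1, ha2⟩ := exists_adj_dist_sub_one G (u := u) (v := v) (by omega) hc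
    exact ⟨a, ha2, (SimpleGraph.dist_eq_one_iff_adj.mpr ha1).le⟩
  have hwx : ∃ a, G.dist u a ≤ G.dist u v - 1 ∧ G.dist w a ≤ 1 := by
    obtain ⟨a, ha1, ha2⟩ :=
      exists_adj_dist_sub_one G (u := u) (v := w) (by omega) hc
    rw [← he] at ha2
    exact ⟨a, ha2, (SimpleGraph.dist_eq_one_iff_adj.mpr ha1).le⟩
  have hvw : ∃ a, G.dist v a ≤ 1 ∧ G.dist w a ≤ 1 := by
    obtain ⟨p, hp⟩ := (hc v w).exists_walk_length_eq_dist
    cases p with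
    | nil => simp at h1
    | cons h' q =>
      rename_i b
      refine ⟨b, (SimpleGraph.dist_eq_one_iff_adj.mpr h').le, ?_⟩
      rw [SimpleGraph.dist_comm]
      have := G.dist_le q
      simp only [SimpleGraph.Walk.length_cons] at hp
      omega
  obtain ⟨a1, ha1, ha1'⟩ := hvx
  obtain ⟨a2, ha2, ha2'⟩ := hwx
  obtain ⟨a3, ha3, ha3'⟩ := hvw
  obtain ⟨x, ⟨hx1, hx2⟩, hx3⟩ :=
    h3 u v w (G.dist u v - 1) 1 1 ⟨a1, ha1, ha1'⟩ ⟨a2, ha2, ha2'⟩ ⟨a3, ha3, ha3'⟩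
  simp only [gball, Set.mem_setOf_eq] at hx1 hx2 hx3
  have hne1 : v ≠ x := by rintro rfl; omega
  have hne2 : w ≠ x := by rintro rfl; omega
  have hd1 : G.dist v x = 1 := by
    have := (hc v x).pos_dist_of_ne hne1; omega
  have hd2 : G.dist w x = 1 := by
    have := (hc w x).pos_dist_of_ne hne2; omega
  refine ⟨x, SimpleGraph.dist_eq_one_iff_adj.mp hd1,
    SimpleGraph.dist_eq_one_iff_adj.mp hd2, ?_⟩
  have htri := hc.dist_triangle (u := u) (v := x) (w := v)
  rw [SimpleGraph.dist_comm (G := G) (u := x) (v := v), hd1] at htri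
  omega
end

section
/- Every weakly modular graph is meshed: the triangle and quadrangle conditions together imply the weak quadrangle condition QC⁻. -/
variable {V : Type*}

/-- Triangle condition. -/
def TriangleCond (G : SimpleGraph V) : Prop :=
  ∀ u v w : V, G.Adj v w → G.dist u v = G.dist u w → 1 ≤ G.dist u v →
    ∃ x, G.Adj v x ∧ G.Adj w x ∧ G.dist u x = G.dist u v - 1

/-- Quadrangle condition. -/
def QuadCond (G : SimpleGraph V) : Prop :=
  ∀ u v w z : V, G.Adj v z → G.Adj z w → ¬ G.Adj v w →
    2 ≤ G.dist u v → G.dist u v = G.dist u w → G.dist u z = G.dist u v + 1 →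
    ∃ x, G.Adj v x ∧ G.Adj w x ∧ G.dist u x = G.dist u v - 1

/-- Meshed: weak quadrangle condition QC⁻. -/
def Meshed (G : SimpleGraph V) : Prop :=
  ∀ u v w : V, G.dist v w = 2 →
    ∃ x, G.Adj v x ∧ G.Adj w x ∧ 2 * G.dist u x ≤ G.dist u v + G.dist u w

private lemma adj_dist_le' {G : SimpleGraph V} (hc : G.Connected) (u y x : V)
    (h : G.Adj y x) : G.dist u x ≤ G.dist u y + 1 := by
  have h1 : G.dist y x = 1 := SimpleGraph.dist_eq_one_iff_adj.mpr h
  have := hc.dist_triangle (u := u) (v := y) (w := x)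
  omega

private lemma exists_mid {G : SimpleGraph V} (hc : G.Connected) {v w : V}
    (h : G.dist v w = 2) : ∃ z, G.Adj v z ∧ G.Adj z w := by
  obtain ⟨p, hp⟩ := (hc.preconnected v w).exists_walk_length_eq_dist
  rw [h] at hp
  refine ⟨p.getVert 1, ?_, ?_⟩
  · have := p.adj_getVert_succ (i := 0) (by omega)
    simpa using this
  · have := p.adj_getVert_succ (i := 1) (by omega)
    have h2 : p.getVert 2 = w := by
      have := p.getVert_length
      rw [hp] at this
      exact this
    rwa [h2] at this

private lemma key_lemma {G : SimpleGraph V} (hc : G.Connected)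
    (hTC : TriangleCond G) (hQC : QuadCond G) (u v w : V)
    (hvw : G.dist v w = 2) (hle : G.dist u v ≤ G.dist u w) :
    ∃ x, G.Adj v x ∧ G.Adj w x ∧ 2 * G.dist u x ≤ G.dist u v + G.dist u w := by
  obtain ⟨z, hvz, hzw⟩ := exists_mid hc hvw
  set dv := G.dist u v with hdv
  set dw := G.dist u w with hdw
  -- basic distance bounds for z
  have hz1 : G.dist u z ≤ dv + 1 := adj_dist_le' hc u v z hvz
  have hz2 : G.dist u z ≤ dw + 1 := adj_dist_le' hc u w z hzw.symm
  have hz3 : dv ≤ G.dist u z + 1 := adj_dist_le' hc u z v hvz.symm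
  have hz4 : dw ≤ G.dist u z + 1 := adj_dist_le' hc u z w hzw
  by_cases hgood : 2 * G.dist u z ≤ dv + dw
  · exact ⟨z, hvz, hzw.symm, hgood⟩
  push_neg at hgood
  -- then dw ≤ dv + 1 and dist u z = dv + 1
  have hdzz : G.dist u z = dv + 1 := by omega
  have hnadj : ¬ G.Adj v w := by
    intro h
    have := SimpleGraph.dist_eq_one_iff_adj.mpr h
    omega
  have hcases : dw = dv ∨ dw = dv + 1 := by omega
  rcases hcases with hcase | hcase
  · -- equal distances case
    rcases Nat.lt_or_ge dv 2 with hlt | hge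
    · -- dv = 0 impossible; dv = 1: take u itself
      have hdv0 : dv ≠ 0 := by
        intro h0
        have huv : u = v := (hc.dist_eq_zero_iff).mp (by omega)
        have huw : u = w := (hc.dist_eq_zero_iff).mp (by omega)
        have : G.dist v w = 0 := by rw [← huv, ← huw, SimpleGraph.dist_self]
        omega
      have huv : G.Adj v u :=
        ((SimpleGraph.dist_eq_one_iff_adj).mp (show G.dist u v = 1 by omega)).symm
      have huw : G.Adj w u :=
        ((SimpleGraph.dist_eq_one_iff_adj).mp (show G.dist u w = 1 by omega)).symm
      refine ⟨u, huv, huw, ?_⟩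
      have huu : G.dist u u = 0 := SimpleGraph.dist_self
      omega
    · obtain ⟨x, hvx, hwx, hx⟩ := hQC u v w z hvz hzw hnadj hge (by omega) hdzz
      exact ⟨x, hvx, hwx, by omega⟩
  · -- dw = dv + 1, dist u z = dw
    have hdvpos : 1 ≤ dv := by
      by_contra h0
      have huv : u = v := (hc.dist_eq_zero_iff).mp (by omega)
      have : G.Adj v w := by
        rw [← huv]
        exact (SimpleGraph.dist_eq_one_iff_adj).mp (by omega)
      exact hnadj this
    -- TC on edge z w
    obtain ⟨x, hzx, hwx, hx⟩ := hTC u z w hzw (by omega) (by omega)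
    have hxd : G.dist u x = dv := by omega
    by_cases hvxadj : G.Adj v x
    · exact ⟨x, hvxadj, hwx, by omega⟩
    · have hvnex : v ≠ x := by
        rintro rfl
        exact hnadj (hwx.symm)
      -- find y adjacent to v and x with dist u y = dv - 1
      have hy : ∃ y, G.Adj v y ∧ G.Adj x y ∧ G.dist u y = dv - 1 := by
        rcases Nat.lt_or_ge dv 2 with hlt | hge
        · have hdv1 : dv = 1 := by omega
          have huv : G.Adj v u :=
            ((SimpleGraph.dist_eq_one_iff_adj).mp (by omega : G.dist u v = 1)).symm
          have hux : G.Adj x u :=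
            ((SimpleGraph.dist_eq_one_iff_adj).mp (by omega : G.dist u x = 1)).symm
          refine ⟨u, huv, hux, ?_⟩
          have huu : G.dist u u = 0 := SimpleGraph.dist_self
          omega
        · obtain ⟨y, hvy, hxy, hyd⟩ := hQC u v x z hvz hzx hvxadj hge (by omega) hdzz
          exact ⟨y, hvy, hxy, hyd⟩
      obtain ⟨y, hvy, hxy, hyd⟩ := hy
      -- y is at distance 2 from w
      have hynw : ¬ G.Adj w y := by
        intro h
        have := adj_dist_le' hc u y w h.symm
        omega
      have hyne : w ≠ y := by
        intro h
        rw [← h] at hyd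
        omega
      have hwy2 : G.dist w y = 2 := by
        have hle2 : G.dist w y ≤ 2 := by
          have t1 : G.dist w x = 1 := SimpleGraph.dist_eq_one_iff_adj.mpr hwx
          have t2 : G.dist x y = 1 := SimpleGraph.dist_eq_one_iff_adj.mpr hxy
          have := hc.dist_triangle (u := w) (v := x) (w := y)
          omega
        have hne0 : G.dist w y ≠ 0 := fun h0 => hyne ((hc.dist_eq_zero_iff).mp h0)
        have hne1 : G.dist w y ≠ 1 := fun h1 => hynw (SimpleGraph.dist_eq_one_iff_adj.mp h1)
        omega
      have hwv2 : G.dist w v = 2 := by rw [SimpleGraph.dist_comm]; exact hvw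
      -- TC from basepoint w on edge y v
      obtain ⟨s, hys, hvs, hsd⟩ := hTC w y v hvy.symm (by omega) (by omega)
      have hws : G.Adj w s := SimpleGraph.dist_eq_one_iff_adj.mp (by omega : G.dist w s = 1)
      have hsu : G.dist u s ≤ dv := by
        have := adj_dist_le' hc u y s hys
        omega
      exact ⟨s, hvs, hws, by omega⟩

theorem weaklyModular_is_meshed (G : SimpleGraph V) (hc : G.Connected)
    (hTC : TriangleCond G) (hQC : QuadCond G) : Meshed G := by
  intro u v w hvw
  rcases le_total (G.dist u v) (G.dist u w) with h | h
  · exact key_lemma hc hTC hQC u v w hvw h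
  · obtain ⟨x, hwx, hvx, hx⟩ :=
      key_lemma hc hTC hQC u w v (by rw [SimpleGraph.dist_comm]; exact hvw) h
    exact ⟨x, hvx, hwx, by omega⟩
end

section
/- Every matroid basis graph is meshed: for any vertices u, v, w with d(v,w) = 2, there exists a common neighbor x of v and w such that 2·d(u,x) ≤ d(u,v) + d(u,w). -/
variable {V : Type*}

/-- The geodesic interval between `u` and `v`. -/
def interval (G : SimpleGraph V) (u v : V) : Set V :=
  {x | G.dist u x + G.dist x v = G.dist u v}

/-- `a x b y` is a square: a 4-cycle with nonadjacent diagonals. -/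
def Square4 (G : SimpleGraph V) (a x b y : V) : Prop :=
  G.Adj a x ∧ G.Adj x b ∧ G.Adj b y ∧ G.Adj y a ∧ ¬ G.Adj a b ∧ ¬ G.Adj x y

/-- Interval condition (weak form): any interval between vertices at distance 2
contains a square through its endpoints. -/
def IntervalCond (G : SimpleGraph V) : Prop :=
  ∀ u v : V, G.dist u v = 2 →
    ∃ x y, x ∈ interval G u v ∧ y ∈ interval G u v ∧ Square4 G u x v y

/-- Positioning condition. -/
def PositioningCond (G : SimpleGraph V) : Prop :=
  ∀ u a x b y : V, Square4 G a x b y →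
    G.dist u a + G.dist u b = G.dist u x + G.dist u y

theorem matroidBasisGraph_is_meshed (G : SimpleGraph V) (hc : G.Connected)
    (hIC : IntervalCond G) (hPC : PositioningCond G) : Meshed G := by
  intro u v w hvw
  obtain ⟨x, y, -, -, hsq⟩ := hIC v w hvw
  have hPC' := hPC u v x w y hsq
  obtain ⟨hvx, hxw, hwy, hyv, -, -⟩ := hsq
  rcases le_total (G.dist u x) (G.dist u y) with h | h
  · exact ⟨x, hvx, hxw.symm, by omega⟩
  · exact ⟨y, hyv.symm, hwy, by omega⟩
end

section
/- Let (A,B) be a shadow-closed pair of sets in a graph G (i.e., A = A/B and B = B/A under geodesic convexity). Then for any x ∉ A ∪ B and any edge ab with a ∈ A and b ∈ B, we have d(x,a) = d(x,b). -/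
variable {V : Type*}

def GeoConvex (G : SimpleGraph V) (X : Set V) : Prop :=
  ∀ u ∈ X, ∀ v ∈ X, interval G u v ⊆ X

def geoHull (G : SimpleGraph V) (S : Set V) : Set V :=
  ⋂₀ {C | GeoConvex G C ∧ S ⊆ C}

/-- The geodesic shadow of `A` with respect to `B`. -/
def shadow (G : SimpleGraph V) (A B : Set V) : Set V :=
  {x | (geoHull G (B ∪ {x}) ∩ A).Nonempty}

theorem shadowClosed_equidistant (G : SimpleGraph V) (hc : G.Connected)
    (A B : Set V) (hdisj : Disjoint A B)
    (hA : shadow G A B = A) (hB : shadow G B A = B)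
    (x : V) (hx : x ∉ A ∪ B)
    (a b : V) (ha : a ∈ A) (hb : b ∈ B) (hab : G.Adj a b) :
    G.dist x a = G.dist x b := by
  have hd1 : G.dist a b = 1 := SimpleGraph.dist_eq_one_iff_adj.mpr hab
  have hd1' : G.dist b a = 1 := by rw [SimpleGraph.dist_comm]; exact hd1
  have t1 : G.dist x b ≤ G.dist x a + 1 := by
    have := hc.dist_triangle (u := x) (v := a) (w := b); omega
  have t2 : G.dist x a ≤ G.dist x b + 1 := by
    have := hc.dist_triangle (u := x) (v := b) (w := a); omega
  by_contra hne
  rcases lt_or_gt_of_ne hne with h | h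
  · -- d(x,a) < d(x,b), so d(x,b) = d(x,a) + 1 and a ∈ interval x b
    have hint : a ∈ interval G x b := by
      simp only [interval, Set.mem_setOf_eq]; omega
    have hhull : a ∈ geoHull G (B ∪ {x}) := by
      intro C hC
      exact hC.1 x (hC.2 (Or.inr rfl)) b (hC.2 (Or.inl hb)) hint
    have : x ∈ shadow G A B := ⟨a, hhull, ha⟩
    rw [hA] at this
    exact hx (Or.inl this)
  · -- d(x,b) < d(x,a), so b ∈ interval x a
    have hint : b ∈ interval G x a := by
      simp only [interval, Set.mem_setOf_eq]; omega
    have hhull : b ∈ geoHull G (A ∪ {x}) := by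
      intro C hC
      exact hC.1 x (hC.2 (Or.inr rfl)) a (hC.2 (Or.inl ha)) hint
    have : x ∈ shadow G B A := ⟨b, hhull, hb⟩
    rw [hB] at this
    exact hx (Or.inr this)
end

section
/- In a meshed graph G, a connected induced subgraph H is geodesically convex if and only if it is locally convex (i.e., whenever x, y ∈ V(H) with d_G(x,y) = 2, we have I(x,y) ⊆ V(H)). -/
variable {V : Type*}

namespace MeshedConvexAux

variable {W : Type*}

/-- Every vertex at positive distance has a neighbor one step closer to `u`. -/
lemma exists_pred {G : SimpleGraph W} (hc : G.Connected) {u v : W} (h : 1 ≤ G.dist u v) :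
    ∃ x, G.Adj v x ∧ G.dist u x + 1 = G.dist u v := by
  obtain ⟨p, hp⟩ := hc.exists_walk_length_eq_dist v u
  cases p with
  | nil =>
      exfalso; rw [SimpleGraph.Walk.length_nil] at hp
      rw [SimpleGraph.dist_comm] at h; omega
  | cons hadj q =>
      rename_i b
      refine ⟨b, hadj, ?_⟩
      have h1 : G.dist b u ≤ q.length := SimpleGraph.dist_le q
      rw [SimpleGraph.Walk.length_cons] at hp
      have h2 : G.dist u v ≤ G.dist u b + G.dist b v := hc.dist_triangle
      have h3 : G.dist b v = 1 := SimpleGraph.dist_eq_one_iff_adj.mpr hadj.symm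
      have h4 : G.dist u b = G.dist b u := SimpleGraph.dist_comm
      have h5 : G.dist v u = G.dist u v := SimpleGraph.dist_comm
      omega

lemma adj_dist {G : SimpleGraph W} {a b : W} (h : G.Adj a b) : G.dist a b = 1 :=
  SimpleGraph.dist_eq_one_iff_adj.mpr h

section TE
variable {G : SimpleGraph W} (hc : G.Connected) (hM : Meshed G)

include hc in
lemma pos_dist {a b : W} (h : a ≠ b) : 1 ≤ G.dist a b :=
  hc.pos_dist_of_ne h

include hc hM in
/-- Triangle condition in meshed graphs. -/
lemma triangle_cond : ∀ j : ℕ, ∀ u x w : W, G.Adj x w → G.dist u x = j → G.dist u w = j →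
    ∃ g, G.Adj x g ∧ G.Adj w g ∧ G.dist u g + 1 = j := by
  intro j
  induction j using Nat.strong_induction_on with
  | _ j IH =>
    intro u x w hxw hx hw
    match j, hx with
    | 0, hx =>
      exfalso
      have : u = x := (hc.dist_eq_zero_iff).mp hx
      have : u = w := (hc.dist_eq_zero_iff).mp hw
      subst_vars
      exact G.loopless.irrefl _ hxw
    | 1, hx =>
      refine ⟨u, ?_, ?_, by simp [SimpleGraph.dist_self]⟩
      · exact ((SimpleGraph.dist_eq_one_iff_adj).mp hx).symm
      · exact ((SimpleGraph.dist_eq_one_iff_adj).mp hw).symm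
    | (j+2), hx => ?_
    set J := j + 2 with hJ
    obtain ⟨g₀, hxg₀, hg₀⟩ := exists_pred hc (u := u) (v := x) (by omega)
    have hne1 : g₀ ≠ w := by intro he; subst he; omega
    have hub : G.dist g₀ w ≤ 2 := by
      have t1 : G.dist g₀ w ≤ G.dist g₀ x + G.dist x w := hc.dist_triangle
      have e1 : G.dist g₀ x = 1 := adj_dist hxg₀.symm
      have e2 : G.dist x w = 1 := adj_dist hxw
      omega
    have hlb : 1 ≤ G.dist g₀ w := pos_dist hc hne1
    rcases (by omega : G.dist g₀ w = 1 ∨ G.dist g₀ w = 2) with h1 | h2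
    · exact ⟨g₀, hxg₀, ((SimpleGraph.dist_eq_one_iff_adj).mp h1).symm, by omega⟩
    obtain ⟨q, hg₀q, hwq, hq2⟩ := hM u g₀ w h2
    have hqw : G.dist u q + 1 = J := by
      have t1 : G.dist u w ≤ G.dist u q + G.dist q w := hc.dist_triangle
      have e1 : G.dist q w = 1 := adj_dist hwq.symm
      omega
    have hqx_ne : q ≠ x := fun he => by subst he; omega
    have hqx_ub : G.dist q x ≤ 2 := by
      have t1 : G.dist q x ≤ G.dist q g₀ + G.dist g₀ x := hc.dist_triangle
      have e1 : G.dist q g₀ = 1 := adj_dist hg₀q.symm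
      have e2 : G.dist g₀ x = 1 := adj_dist hxg₀.symm
      omega
    rcases (by have := pos_dist hc hqx_ne; omega : G.dist q x = 1 ∨ G.dist q x = 2) with h1 | hqx2
    · exact ⟨q, ((SimpleGraph.dist_eq_one_iff_adj).mp h1).symm, hwq, by omega⟩
    obtain ⟨r, hqr, hxr, hr2⟩ := hM u q x hqx2
    have hru : G.dist u r + 1 = J := by
      have t1 : G.dist u x ≤ G.dist u r + G.dist r x := hc.dist_triangle
      have e1 : G.dist r x = 1 := adj_dist hxr.symm
      omega
    have hrw_ne : r ≠ w := fun he => by subst he; omega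
    have hrw_ub : G.dist r w ≤ 2 := by
      have t1 : G.dist r w ≤ G.dist r q + G.dist q w := hc.dist_triangle
      have e1 : G.dist r q = 1 := adj_dist hqr.symm
      have e2 : G.dist q w = 1 := adj_dist hwq.symm
      omega
    rcases (by have := pos_dist hc hrw_ne; omega : G.dist r w = 1 ∨ G.dist r w = 2) with h1 | hrw2
    · exact ⟨r, hxr, ((SimpleGraph.dist_eq_one_iff_adj).mp h1).symm, by omega⟩
    obtain ⟨s, hqs, hrs, hs⟩ := IH (j+1) (by omega) u q r hqr (by omega) (by omega)
    have hsx : G.dist s x = 2 := by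
      have t1 : G.dist s x ≤ G.dist s r + G.dist r x := hc.dist_triangle
      have t2 : G.dist u x ≤ G.dist u s + G.dist s x := hc.dist_triangle
      have e1 : G.dist s r = 1 := adj_dist hrs.symm
      have e2 : G.dist r x = 1 := adj_dist hxr.symm
      omega
    have hsw : G.dist s w = 2 := by
      have t1 : G.dist s w ≤ G.dist s q + G.dist q w := hc.dist_triangle
      have t2 : G.dist u w ≤ G.dist u s + G.dist s w := hc.dist_triangle
      have e1 : G.dist s q = 1 := adj_dist hqs.symm
      have e2 : G.dist q w = 1 := adj_dist hwq.symm
      omega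
    obtain ⟨c, hsc, hxc, hc2⟩ := hM w s x hsx
    have hwc : G.Adj w c := by
      have e1 : G.dist w s = 2 := SimpleGraph.dist_comm.trans hsw
      have e2 : G.dist w x = 1 := adj_dist hxw.symm
      have hne : c ≠ w := by
        intro he; subst he
        have e3 : G.dist s c = 1 := adj_dist hsc
        rw [SimpleGraph.dist_comm] at e3
        omega
      have p1 : 1 ≤ G.dist w c := pos_dist hc (Ne.symm hne)
      have : G.dist w c = 1 := by omega
      exact (SimpleGraph.dist_eq_one_iff_adj).mp this
    refine ⟨c, hxc, hwc, ?_⟩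
    have t1 : G.dist u c ≤ G.dist u s + G.dist s c := hc.dist_triangle
    have t2 : G.dist u x ≤ G.dist u c + G.dist c x := hc.dist_triangle
    have e1 : G.dist s c = 1 := adj_dist hsc
    have e2 : G.dist c x = 1 := SimpleGraph.dist_comm.trans (adj_dist hxc)
    omega

include hc hM in
/-- Equal-level fellow traveler property in meshed graphs. -/
lemma lemmaE {u x w : W} {j : ℕ} (hx : G.dist u x = j) (hw : G.dist u w = j)
    (hxw : G.dist x w = 2) :
    ∃ g, G.Adj x g ∧ G.dist u g + 1 = j ∧ G.dist g w ≤ 2 := by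
  obtain ⟨y, hxy, hwy, hy2⟩ := hM u x w hxw
  have hyl : j ≤ G.dist u y + 1 := by
    have t1 : G.dist u x ≤ G.dist u y + G.dist y x := hc.dist_triangle
    have e1 : G.dist y x = 1 := adj_dist hxy.symm
    omega
  rcases (by omega : G.dist u y + 1 = j ∨ G.dist u y = j) with h1 | h2
  · exact ⟨y, hxy, h1, by
      have e1 : G.dist y w = 1 := adj_dist hwy.symm
      omega⟩
  · obtain ⟨g, hxg, hyg, hg⟩ := triangle_cond hc hM j u x y hxy hx h2
    refine ⟨g, hxg, hg, ?_⟩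
    have t1 : G.dist g w ≤ G.dist g y + G.dist y w := hc.dist_triangle
    have e1 : G.dist g y = 1 := adj_dist hyg.symm
    have e2 : G.dist y w = 1 := adj_dist hwy.symm
    omega

end TE

end MeshedConvexAux

open MeshedConvexAux in
theorem meshed_convex_iff_locallyConvex (G : SimpleGraph V) (hc : G.Connected)
    (hM : Meshed G) (S : Set V) (hS : (SimpleGraph.induce S G).Connected) :
    GeoConvex G S ↔
      ∀ x ∈ S, ∀ y ∈ S, G.dist x y = 2 → interval G x y ⊆ S := by
  constructor
  · intro h x hx y hy _
    exact h x hx y hy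
  · intro LC
    set H := SimpleGraph.induce S G with hH
    -- Lemma A : a locally convex connected set admits "gates" towards any of its points
    have lemA : ∀ m : ℕ, ∀ u v : V, ∀ hu : u ∈ S, ∀ hv : v ∈ S,
        H.dist ⟨u, hu⟩ ⟨v, hv⟩ = m → u ≠ v →
        ∃ w, ∃ hw : w ∈ S, G.Adj v w ∧ G.dist u w + 1 = G.dist u v ∧
          H.dist ⟨u, hu⟩ ⟨w, hw⟩ < m := by
      intro m
      induction m using Nat.strong_induction_on with
      | _ m IH =>
        intro u v hu hv hm hne
        have hne' : (⟨u, hu⟩ : S) ≠ ⟨v, hv⟩ := fun h => hne (congrArg Subtype.val h)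
        have hm1 : 1 ≤ m := hm ▸ hS.pos_dist_of_ne hne'
        obtain ⟨⟨w₁, hw₁S⟩, hadj₁, hd₁⟩ :=
          exists_pred hS (u := (⟨u, hu⟩ : S)) (v := ⟨v, hv⟩) (by omega)
        rw [hm] at hd₁
        have hGadj₁ : G.Adj v w₁ := hadj₁
        have hk1 : 1 ≤ G.dist u v := pos_dist hc hne
        have ht1 : G.dist u v ≤ G.dist u w₁ + 1 := by
          have t : G.dist u v ≤ G.dist u w₁ + G.dist w₁ v := hc.dist_triangle
          have e : G.dist w₁ v = 1 := adj_dist hGadj₁.symm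
          omega
        have ht2 : G.dist u w₁ ≤ G.dist u v + 1 := by
          have t : G.dist u w₁ ≤ G.dist u v + G.dist v w₁ := hc.dist_triangle
          have e : G.dist v w₁ = 1 := adj_dist hGadj₁
          omega
        rcases (by omega : G.dist u w₁ + 1 = G.dist u v ∨ G.dist u w₁ = G.dist u v
            ∨ G.dist u w₁ = G.dist u v + 1) with hc1 | hc2 | hc3
        · exact ⟨w₁, hw₁S, hGadj₁, hc1, by omega⟩
        · -- G.dist u w₁ = G.dist u v =: k
          have hnuw : u ≠ w₁ := by
            intro he; subst he
            rw [SimpleGraph.dist_self] at hc2; omega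
          obtain ⟨w₂, hw₂S, hadj₂, hd₂, hsd₂⟩ :=
            IH (H.dist ⟨u, hu⟩ ⟨w₁, hw₁S⟩) (by omega) u w₁ hu hw₁S rfl hnuw
          -- w₂ : S-vertex adjacent to w₁ with dist u w₂ + 1 = dist u w₁ = k
          have hw₂v_ub : G.dist w₂ v ≤ 2 := by
            have t : G.dist w₂ v ≤ G.dist w₂ w₁ + G.dist w₁ v := hc.dist_triangle
            have e1 : G.dist w₂ w₁ = 1 := adj_dist hadj₂.symm
            have e2 : G.dist w₁ v = 1 := adj_dist hGadj₁.symm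
            omega
          have hw₂v_ne : w₂ ≠ v := by
            intro he; subst he; omega
          rcases (by have := pos_dist hc hw₂v_ne; omega :
              G.dist w₂ v = 1 ∨ G.dist w₂ v = 2) with h1 | h2
          · refine ⟨w₂, hw₂S, ((SimpleGraph.dist_eq_one_iff_adj).mp h1).symm, by omega, by omega⟩
          · obtain ⟨y, hw₂y, hvy, hy2⟩ := hM u w₂ v h2
            have hyv : G.dist u y + 1 = G.dist u v := by
              have t : G.dist u v ≤ G.dist u y + G.dist y v := hc.dist_triangle
              have e : G.dist y v = 1 := adj_dist hvy.symm
              omega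
            have hyS : y ∈ S := by
              refine LC w₂ hw₂S v hv h2 ?_
              show G.dist w₂ y + G.dist y v = G.dist w₂ v
              have e1 : G.dist w₂ y = 1 := adj_dist hw₂y
              have e2 : G.dist y v = 1 := adj_dist hvy.symm
              omega
            refine ⟨y, hyS, hvy, hyv, ?_⟩
            have hHadj : H.Adj ⟨w₂, hw₂S⟩ ⟨y, hyS⟩ := hw₂y
            have t : H.dist ⟨u, hu⟩ ⟨y, hyS⟩ ≤
                H.dist ⟨u, hu⟩ ⟨w₂, hw₂S⟩ + H.dist ⟨w₂, hw₂S⟩ ⟨y, hyS⟩ := hS.dist_triangle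
            have e : H.dist ⟨w₂, hw₂S⟩ ⟨y, hyS⟩ = 1 := adj_dist hHadj
            omega
        · -- G.dist u w₁ = G.dist u v + 1
          have hnuw : u ≠ w₁ := by
            intro he; subst he
            rw [SimpleGraph.dist_self] at hc3; omega
          obtain ⟨w₂, hw₂S, hadj₂, hd₂, hsd₂⟩ :=
            IH (H.dist ⟨u, hu⟩ ⟨w₁, hw₁S⟩) (by omega) u w₁ hu hw₁S rfl hnuw
          -- dist u w₂ = dist u v
          have hw₂v_ne : w₂ ≠ v := by
            intro he
            have : (⟨w₂, hw₂S⟩ : S) = ⟨v, hv⟩ := Subtype.ext he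
            rw [this, hm] at hsd₂; omega
          have hw₂v_ub : G.dist w₂ v ≤ 2 := by
            have t : G.dist w₂ v ≤ G.dist w₂ w₁ + G.dist w₁ v := hc.dist_triangle
            have e1 : G.dist w₂ w₁ = 1 := adj_dist hadj₂.symm
            have e2 : G.dist w₁ v = 1 := adj_dist hGadj₁.symm
            omega
          rcases (by have := pos_dist hc hw₂v_ne; omega :
              G.dist w₂ v = 1 ∨ G.dist w₂ v = 2) with h1 | h2
          · exfalso
            have hGA : G.Adj w₂ v := (SimpleGraph.dist_eq_one_iff_adj).mp h1
            have hHadj : H.Adj ⟨w₂, hw₂S⟩ ⟨v, hv⟩ := hGA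
            have t : H.dist ⟨u, hu⟩ ⟨v, hv⟩ ≤
                H.dist ⟨u, hu⟩ ⟨w₂, hw₂S⟩ + H.dist ⟨w₂, hw₂S⟩ ⟨v, hv⟩ := hS.dist_triangle
            have e : H.dist ⟨w₂, hw₂S⟩ ⟨v, hv⟩ = 1 := adj_dist hHadj
            rw [hm] at t; omega
          · obtain ⟨y, hw₂y, hvy, hy2⟩ := hM u w₂ v h2
            have hyv_lb : G.dist u v ≤ G.dist u y + 1 := by
              have t : G.dist u v ≤ G.dist u y + G.dist y v := hc.dist_triangle
              have e : G.dist y v = 1 := adj_dist hvy.symm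
              omega
            have hyS : y ∈ S := by
              refine LC w₂ hw₂S v hv h2 ?_
              show G.dist w₂ y + G.dist y v = G.dist w₂ v
              have e1 : G.dist w₂ y = 1 := adj_dist hw₂y
              have e2 : G.dist y v = 1 := adj_dist hvy.symm
              omega
            have hsy : H.dist ⟨u, hu⟩ ⟨y, hyS⟩ ≤ H.dist ⟨u, hu⟩ ⟨w₂, hw₂S⟩ + 1 := by
              have hHadj : H.Adj ⟨w₂, hw₂S⟩ ⟨y, hyS⟩ := hw₂y
              have t : H.dist ⟨u, hu⟩ ⟨y, hyS⟩ ≤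
                  H.dist ⟨u, hu⟩ ⟨w₂, hw₂S⟩ + H.dist ⟨w₂, hw₂S⟩ ⟨y, hyS⟩ := hS.dist_triangle
              have e : H.dist ⟨w₂, hw₂S⟩ ⟨y, hyS⟩ = 1 := adj_dist hHadj
              omega
            rcases (by omega : G.dist u y + 1 = G.dist u v ∨ G.dist u y = G.dist u v)
              with h3 | h4
            · exact ⟨y, hyS, hvy, h3, by omega⟩
            · -- recurse once more from y
              have hnuy : u ≠ y := by
                intro he; subst he
                rw [SimpleGraph.dist_self] at h4; omega
              obtain ⟨w₃, hw₃S, hadj₃, hd₃, hsd₃⟩ :=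
                IH (H.dist ⟨u, hu⟩ ⟨y, hyS⟩) (by omega) u y hu hyS rfl hnuy
              have hw₃v_ne : w₃ ≠ v := by
                intro he; subst he; omega
              have hw₃v_ub : G.dist w₃ v ≤ 2 := by
                have t : G.dist w₃ v ≤ G.dist w₃ y + G.dist y v := hc.dist_triangle
                have e1 : G.dist w₃ y = 1 := adj_dist hadj₃.symm
                have e2 : G.dist y v = 1 := adj_dist hvy.symm
                omega
              rcases (by have := pos_dist hc hw₃v_ne; omega :
                  G.dist w₃ v = 1 ∨ G.dist w₃ v = 2) with h5 | h6
              · exact ⟨w₃, hw₃S, ((SimpleGraph.dist_eq_one_iff_adj).mp h5).symm,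
                  by omega, by omega⟩
              · obtain ⟨z, hw₃z, hvz, hz2⟩ := hM u w₃ v h6
                have hzv : G.dist u z + 1 = G.dist u v := by
                  have t : G.dist u v ≤ G.dist u z + G.dist z v := hc.dist_triangle
                  have e : G.dist z v = 1 := adj_dist hvz.symm
                  omega
                have hzS : z ∈ S := by
                  refine LC w₃ hw₃S v hv h6 ?_
                  show G.dist w₃ z + G.dist z v = G.dist w₃ v
                  have e1 : G.dist w₃ z = 1 := adj_dist hw₃z
                  have e2 : G.dist z v = 1 := adj_dist hvz.symm
                  omega
                refine ⟨z, hzS, hvz, hzv, ?_⟩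
                have hHadj : H.Adj ⟨w₃, hw₃S⟩ ⟨z, hzS⟩ := hw₃z
                have t : H.dist ⟨u, hu⟩ ⟨z, hzS⟩ ≤
                    H.dist ⟨u, hu⟩ ⟨w₃, hw₃S⟩ + H.dist ⟨w₃, hw₃S⟩ ⟨z, hzS⟩ := hS.dist_triangle
                have e : H.dist ⟨w₃, hw₃S⟩ ⟨z, hzS⟩ = 1 := adj_dist hHadj
                omega
    -- Main induction on the distance
    suffices key : ∀ k : ℕ, ∀ u v : V, u ∈ S → v ∈ S → G.dist u v = k →
        interval G u v ⊆ S by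
      intro u hu v hv
      exact key (G.dist u v) u v hu hv rfl
    intro k
    induction k using Nat.strong_induction_on with
    | _ k IH =>
      intro u v hu hv hk z hz
      have hz' : G.dist u z + G.dist z v = G.dist u v := hz
      match k, hk with
      | 0, hk =>
        have : z = u := ((hc.dist_eq_zero_iff).mp (by omega : G.dist u z = 0)).symm
        exact this ▸ hu
      | 1, hk =>
        rcases (by omega : G.dist u z = 0 ∨ G.dist z v = 0) with h0 | h0
        · exact ((hc.dist_eq_zero_iff).mp h0) ▸ hu
        · exact ((hc.dist_eq_zero_iff).mp h0).symm ▸ hv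
      | 2, hk =>
        exact LC u hu v hv hk hz
      | (n+3), hk => ?_
      set k := n + 3 with hkdef
      -- Claim: any neighbor of v on a geodesic from u is in S
      have claim : ∀ x, G.Adj v x → G.dist u x + 1 = k → x ∈ S := by
        intro x hvx hx
        have hne : u ≠ v := by
          intro he; subst he
          rw [SimpleGraph.dist_self] at hk; omega
        obtain ⟨w, hwS, hvw, hw, -⟩ :=
          lemA (H.dist ⟨u, hu⟩ ⟨v, hv⟩) u v hu hv rfl hne
        rw [hk] at hw
        -- dist x w ≤ 2
        have hxw_ub : G.dist x w ≤ 2 := by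
          have t : G.dist x w ≤ G.dist x v + G.dist v w := hc.dist_triangle
          have e1 : G.dist x v = 1 := adj_dist hvx.symm
          have e2 : G.dist v w = 1 := adj_dist hvw
          omega
        by_cases hxweq : x = w
        · exact hxweq ▸ hwS
        have hgv2 : ∀ g : V, G.Adj x g → G.dist u g + 1 + 1 = k → G.dist g v = 2 := by
          intro g hxg hg
          have t1 : G.dist g v ≤ G.dist g x + G.dist x v := hc.dist_triangle
          have t2 : G.dist u v ≤ G.dist u g + G.dist g v := hc.dist_triangle
          have e1 : G.dist g x = 1 := adj_dist hxg.symm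
          have e2 : G.dist x v = 1 := adj_dist hvx.symm
          omega
        -- membership via a lower S-vertex g with x ∈ I(g,v)
        have viaG : ∀ g : V, G.Adj x g → G.dist u g + 1 + 1 = k → g ∈ S → x ∈ S := by
          intro g hxg hg hgS
          have h2 : G.dist g v = 2 := hgv2 g hxg hg
          refine LC g hgS v hv h2 ?_
          show G.dist g x + G.dist x v = G.dist g v
          have e1 : G.dist g x = 1 := adj_dist hxg.symm
          have e2 : G.dist x v = 1 := adj_dist hvx.symm
          omega
        -- membership of g via interval to w
        have gInS : ∀ g : V, G.Adj w g → G.dist u g + 1 + 1 = k → g ∈ S := by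
          intro g hwg hg
          refine IH (k-1) (by omega) u w hu hwS (by omega) ?_
          show G.dist u g + G.dist g w = G.dist u w
          have e1 : G.dist g w = 1 := adj_dist hwg.symm
          omega
        rcases (by have := pos_dist hc hxweq; omega :
            G.dist x w = 1 ∨ G.dist x w = 2) with h1 | h2
        · -- triangle case
          obtain ⟨g, hxg, hwg, hg⟩ := triangle_cond hc hM (k-1) u x w
            ((SimpleGraph.dist_eq_one_iff_adj).mp h1) (by omega) (by omega)
          exact viaG g hxg (by omega) (gInS g hwg (by omega))
        · -- distance-2 case
          obtain ⟨g, hxg, hg, hgw_ub⟩ := lemmaE hc hM (j := k-1)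
            (by omega : G.dist u x = k-1) (by omega : G.dist u w = k-1) h2
          have hgw_ne : g ≠ w := by intro he; subst he; omega
          have hg' : G.dist u g + 1 + 1 = k := by omega
          rcases (by have := pos_dist hc hgw_ne; omega :
              G.dist g w = 1 ∨ G.dist g w = 2) with h3 | h4
          · exact viaG g hxg hg' (gInS g ((SimpleGraph.dist_eq_one_iff_adj).mp h3).symm hg')
          · -- meshed (u; g, w) → m
            obtain ⟨m, hgm, hwm, hm2⟩ := hM u g w h4
            have hmu : G.dist u m + 1 + 1 = k := by
              have t : G.dist u w ≤ G.dist u m + G.dist m w := hc.dist_triangle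
              have e : G.dist m w = 1 := adj_dist hwm.symm
              omega
            have hmS : m ∈ S := gInS m hwm hmu
            have hmv : G.dist m v = 2 := by
              have t1 : G.dist m v ≤ G.dist m w + G.dist w v := hc.dist_triangle
              have t2 : G.dist u v ≤ G.dist u m + G.dist m v := hc.dist_triangle
              have e1 : G.dist m w = 1 := adj_dist hwm.symm
              have e2 : G.dist w v = 1 := adj_dist hvw.symm
              omega
            -- meshed (m; g, v) → t
            obtain ⟨t, hgt, hvt, ht2⟩ := hM m g v (hgv2 g hxg hg')
            have htm : G.dist m t = 1 := by
              have e1 : G.dist m g = 1 := adj_dist hgm.symm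
              have hne2 : t ≠ m := by
                intro he
                have e2 : G.dist m v = 1 := adj_dist (he ▸ hvt).symm
                omega
              have := pos_dist hc (Ne.symm hne2)
              omega
            have htS : t ∈ S := by
              refine LC m hmS v hv hmv ?_
              show G.dist m t + G.dist t v = G.dist m v
              have e2 : G.dist t v = 1 := adj_dist hvt.symm
              omega
            have htu : G.dist u t + 1 = k := by
              have t1 : G.dist u t ≤ G.dist u g + G.dist g t := hc.dist_triangle
              have t2 : G.dist u v ≤ G.dist u t + G.dist t v := hc.dist_triangle
              have e1 : G.dist g t = 1 := adj_dist hgt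
              have e2 : G.dist t v = 1 := adj_dist hvt.symm
              omega
            have hgS : g ∈ S := by
              refine IH (k-1) (by omega) u t hu htS (by omega) ?_
              show G.dist u g + G.dist g t = G.dist u t
              have e1 : G.dist g t = 1 := adj_dist hgt
              omega
            exact viaG g hxg hg' hgS
      -- finish: walk from z towards v
      rcases Nat.eq_zero_or_pos (G.dist z v) with h0 | hpos
      · exact ((hc.dist_eq_zero_iff).mp h0).symm ▸ hv
      obtain ⟨v₁, hvv₁, hv₁⟩ := exists_pred hc (u := z) (v := v) hpos
      have hv₁u : G.dist u v₁ + 1 = k := by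
        have t1 : G.dist u v ≤ G.dist u v₁ + G.dist v₁ v := hc.dist_triangle
        have t2 : G.dist u v₁ ≤ G.dist u z + G.dist z v₁ := hc.dist_triangle
        have e1 : G.dist v₁ v = 1 := adj_dist hvv₁.symm
        omega
      have hv₁S : v₁ ∈ S := claim v₁ hvv₁ hv₁u
      refine IH (k-1) (by omega) u v₁ hu hv₁S (by omega) ?_
      show G.dist u z + G.dist z v₁ = G.dist u v₁
      have t2 : G.dist u v₁ ≤ G.dist u z + G.dist z v₁ := hc.dist_triangle
      omega
end

section
/- If a halfspace H of a graph G (with geodesic convexity) separates sets A and B, then H also separates the shadows A/B and B/A; in particular the iterated shadow-closure (A*, B*) satisfies: there is a halfspace separating A and B iff there is one separating A* and B*. -/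
variable {V : Type*}

/-- The iterated shadow-closure sequence `(Aⁱ, Bⁱ)`. -/
def closureSeq (G : SimpleGraph V) (A B : Set V) : ℕ → Set V × Set V
  | 0 => (A, B)
  | n + 1 =>
      (geoHull G (shadow G (closureSeq G A B n).1 (closureSeq G A B n).2),
       geoHull G (shadow G (closureSeq G A B n).2 (closureSeq G A B n).1))

theorem halfspace_sep_shadow_closure (G : SimpleGraph V) (hc : G.Connected)
    (A B : Set V) :
    (∀ H : Set V, GeoConvex G H → GeoConvex G Hᶜ → A ⊆ H → B ⊆ Hᶜ →
        shadow G A B ⊆ H ∧ shadow G B A ⊆ Hᶜ) ∧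
      ∀ N : ℕ, closureSeq G A B (N + 1) = closureSeq G A B N →
        ((∃ H : Set V, GeoConvex G H ∧ GeoConvex G Hᶜ ∧ A ⊆ H ∧ B ⊆ Hᶜ) ↔
          ∃ H : Set V, GeoConvex G H ∧ GeoConvex G Hᶜ ∧
            (closureSeq G A B N).1 ⊆ H ∧ (closureSeq G A B N).2 ⊆ Hᶜ) := by
  have hull_sub : ∀ (S C : Set V), GeoConvex G C → S ⊆ C → geoHull G S ⊆ C := by
    intro S C hC hSC x hx
    exact hx C ⟨hC, hSC⟩
  have sub_hull : ∀ (S : Set V), S ⊆ geoHull G S := by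
    intro S x hx C hC
    exact hC.2 hx
  have shadow_sub : ∀ (A' B' H : Set V), GeoConvex G Hᶜ → A' ⊆ H → B' ⊆ Hᶜ →
      shadow G A' B' ⊆ H := by
    intro A' B' H hHc hA hB x hx
    by_contra hxH
    obtain ⟨y, hy1, hy2⟩ := hx
    have : geoHull G (B' ∪ {x}) ⊆ Hᶜ := hull_sub _ _ hHc (by
      intro z hz
      rcases hz with hz | hz
      · exact hB hz
      · rw [Set.mem_singleton_iff] at hz; subst hz; exact hxH)
    exact this hy1 (hA hy2)
  have sub_shadow : ∀ (A' B' : Set V), A' ⊆ shadow G A' B' := by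
    intro A' B' x hx
    exact ⟨x, sub_hull _ (Or.inr rfl), hx⟩
  have main : ∀ H : Set V, GeoConvex G H → GeoConvex G Hᶜ → A ⊆ H → B ⊆ Hᶜ →
      shadow G A B ⊆ H ∧ shadow G B A ⊆ Hᶜ := by
    intro H hH hHc hA hB
    refine ⟨shadow_sub A B H hHc hA hB, shadow_sub B A Hᶜ (by simpa using hH) hB ?_⟩
    simpa using hA
  refine ⟨main, ?_⟩
  intro N _
  constructor
  · rintro ⟨H, hH, hHc, hA, hB⟩
    have sep : ∀ n, (closureSeq G A B n).1 ⊆ H ∧ (closureSeq G A B n).2 ⊆ Hᶜ := by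
      intro n
      induction n with
      | zero => exact ⟨hA, hB⟩
      | succ m ih =>
        obtain ⟨h1, h2⟩ := ih
        constructor
        · exact hull_sub _ _ hH (shadow_sub _ _ H hHc h1 h2)
        · exact hull_sub _ _ hHc (shadow_sub _ _ Hᶜ (by simpa using hH) h2 (by simpa using h1))
    exact ⟨H, hH, hHc, (sep N).1, (sep N).2⟩
  · rintro ⟨H, hH, hHc, hA, hB⟩
    have mono : ∀ n, A ⊆ (closureSeq G A B n).1 ∧ B ⊆ (closureSeq G A B n).2 := by
      intro n
      induction n with
      | zero => exact ⟨subset_rfl, subset_rfl⟩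
      | succ m ih =>
        exact ⟨ih.1.trans ((sub_shadow _ _).trans (sub_hull _)),
          ih.2.trans ((sub_shadow _ _).trans (sub_hull _))⟩
    exact ⟨H, hH, hHc, (mono N).1.trans hA, (mono N).2.trans hB⟩
end

section
/- In a graph satisfying the interval condition and the positioning condition (i.e., a matroid basis graph), for any vertices u, v, w with d(v,w) = 2 and d(u,v) + d(u,w) = k, there exist two common neighbors x, y of v and w forming a square vxwy with d(u,x) + d(u,y) = k; in particular min(d(u,x), d(u,y)) ≤ k/2. -/
variable {V : Type*}

theorem square_with_balanced_distances (G : SimpleGraph V) (hc : G.Connected)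
    (hIC : IntervalCond G) (hPC : PositioningCond G)
    (u v w : V) (hvw : G.dist v w = 2) (k : ℕ) (hk : G.dist u v + G.dist u w = k) :
    ∃ x y, Square4 G v x w y ∧ G.dist u x + G.dist u y = k ∧
      2 * min (G.dist u x) (G.dist u y) ≤ k := by
  obtain ⟨x, y, _, _, hsq⟩ := hIC v w hvw
  have h := hPC u v x w y hsq
  refine ⟨x, y, hsq, by omega, by omega⟩
end

section
/- In a pseudo-modular graph G with a shadow-closed osculating pair (A,B) of convex sets, there do not exist vertices x, y ∈ V ∖ (A∪B) with d(x,y) = 2, a vertex z ∈ I(x,y) ∖ (A∪B), an edge ab with a ∈ A, b ∈ B, and d(x,a)=d(x,b)=d(y,a)=d(y,b)=d(z,a)=d(z,b)=k ≥ 2, such that simultaneously: no common neighbor u of x and y with d(u,b) = k−1 lies in V ∖ (A∪B) or in A, and I(x,y) ∩ B = ∅. In other words, the pseudo-modularity forces a common neighbor u of x,y with d(u,b)=k−1, and u must lie in B, giving I(x,y) ∩ B ≠ ∅. -/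
variable {V : Type*}

theorem pseudoModular_local_convexity_obstruction (G : SimpleGraph V)
    (hc : G.Connected) (hpm : PseudoModular G)
    (A B : Set V) (hAconv : GeoConvex G A) (hBconv : GeoConvex G B)
    (hdisj : Disjoint A B)
    (hA : shadow G A B = A) (hB : shadow G B A = B)
    (hosc : ∃ a ∈ A, ∃ b ∈ B, G.Adj a b)
    (x y z a b : V) (k : ℕ)
    (hx : x ∉ A ∪ B) (hy : y ∉ A ∪ B) (hz : z ∉ A ∪ B)
    (hxy : G.dist x y = 2) (hzI : z ∈ interval G x y)
    (ha : a ∈ A) (hb : b ∈ B) (hab : G.Adj a b)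
    (hxa : G.dist x a = k) (hxb : G.dist x b = k)
    (hya : G.dist y a = k) (hyb : G.dist y b = k)
    (hza : G.dist z a = k) (hzb : G.dist z b = k) (hk : 2 ≤ k) :
    (interval G x y ∩ B).Nonempty ∨
      ∃ u, G.Adj x u ∧ G.Adj y u ∧ u ∉ A ∪ B ∧
        G.dist u a = k - 1 ∧ G.dist u b = k - 1 := by
  have hab1 : G.dist a b = 1 := SimpleGraph.dist_eq_one_iff_adj.mpr hab
  have hbx : G.dist b x = k := by rwa [SimpleGraph.dist_comm]
  have hby : G.dist b y = k := by rwa [SimpleGraph.dist_comm]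
  obtain ⟨u, hxu, hyu, hbu⟩ := hpm b x y (by omega) (by omega)
    (by omega) (by rw [hbx, hby])
  rw [hbx] at hbu
  have hub : G.dist u b = k - 1 := by rwa [SimpleGraph.dist_comm]
  have hxu1 : G.dist x u = 1 := SimpleGraph.dist_eq_one_iff_adj.mpr hxu
  have hyu1 : G.dist y u = 1 := SimpleGraph.dist_eq_one_iff_adj.mpr hyu
  -- d(u,a) is k-1 or k
  have hua_ub : G.dist u a ≤ k := by
    have := hc.dist_triangle (u := u) (v := b) (w := a)
    rw [hub, SimpleGraph.dist_comm (G:=G) (u:=b) (v:=a), hab1] at this; omega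
  have hua_lb : k - 1 ≤ G.dist u a := by
    have := hc.dist_triangle (u := x) (v := u) (w := a)
    rw [hxa, hxu1] at this; omega
  by_cases huB : u ∈ B
  · left
    refine ⟨u, ?_, huB⟩
    simp only [interval, Set.mem_setOf_eq, hxu1, SimpleGraph.dist_comm (G:=G) (u:=u) (v:=y), hyu1, hxy]
  by_cases huA : u ∈ A
  · -- then x ∈ shadow G A B = A, contradiction
    exfalso
    apply hx
    left
    rw [← hA]
    refine ⟨u, ?_, huA⟩
    intro C hC
    obtain ⟨hCconv, hCsub⟩ := hC
    have hxC : x ∈ C := hCsub (Or.inr rfl)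
    have hbC : b ∈ C := hCsub (Or.inl hb)
    exact hCconv x hxC b hbC (by simp only [interval, Set.mem_setOf_eq, hxu1, hub, hxb]; omega)
  · right
    refine ⟨u, hxu, hyu, by simp [huA, huB], ?_, hub⟩
    -- if d(u,a) = k then u ∈ shadow G B A = B, contradiction
    rcases Nat.lt_or_ge (G.dist u a) k with h | h
    · omega
    · exfalso
      apply huB
      rw [← hB]
      refine ⟨b, ?_, hb⟩
      intro C hC
      obtain ⟨hCconv, hCsub⟩ := hC
      have haC : a ∈ C := hCsub (Or.inl ha)
      have huC : u ∈ C := hCsub (Or.inr rfl)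
      refine hCconv u huC a haC ?_
      simp only [interval, Set.mem_setOf_eq, hub, SimpleGraph.dist_comm (G:=G) (u:=b) (v:=a), hab1]
      omega
end
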